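/- Let w be a word with nondecreasing rearrangement \bar{w} = u₁⋯uₙ whose blocks of equal letters end at positions b₁ < b₂ < ⋯ < b_k < n (so u₁ = ⋯ = u_{b₁} < u_{b₁+1} = ⋯ = u_{b₂} < ⋯ < u_{b_k+1} = ⋯ = uₙ). Then a permutation π ∈ Sₙ lies in the image of the rearrangement class R(w) under the coding map c if and only if Id(π) ⊆ {b₁, b₂, …, b_k}. -/

import Mathlib

/-- Value of the word `l` at 1-based position `i` (0 if out of range). -/
def wv (l : List ℕ) (i : ℕ) : ℕ := l.getD (i - 1) 0

/-- Descent set (1-based positions `i < n` with `wᵢ > wᵢ₊₁`). -/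
def DSet (l : List ℕ) : Finset ℕ :=
  (Finset.Ico 1 l.length).filter fun i => wv l (i + 1) < wv l i

def des (l : List ℕ) : ℕ := (DSet l).card

def MAJ (l : List ℕ) : ℕ := ∑ i ∈ DSet l, i

/-- First letter. -/
def Fst (l : List ℕ) : ℕ := wv l 1

/-- Number of triples (i, i+1, j) with i+1 < j ≤ n satisfying the pattern
condition `p a b c` where a = wᵢ, b = wᵢ₊₁, c = wⱼ. -/
def tripCount (l : List ℕ) (p : ℕ → ℕ → ℕ → Bool) : ℕ :=
  (((Finset.Ico 1 l.length) ×ˢ (Finset.Icc 1 l.length)).filter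
    (fun q => q.1 + 1 < q.2 ∧ p (wv l q.1) (wv l (q.1 + 1)) (wv l q.2) = true)).card

/-- Number of triples (i, j, j+1) with i < j, j+1 ≤ n satisfying
`p a b c` where a = wᵢ, b = wⱼ, c = wⱼ₊₁. -/
def tripCount2 (l : List ℕ) (p : ℕ → ℕ → ℕ → Bool) : ℕ :=
  (((Finset.Icc 1 l.length) ×ˢ (Finset.Ico 1 l.length)).filter
    (fun q => q.1 < q.2 ∧ p (wv l q.1) (wv l q.2) (wv l (q.2 + 1)) = true)).card

/-- STAT on permutations: occurrences of 21 + 132 + 213 + 321 (first two letters adjacent). -/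
def STATp (l : List ℕ) : ℕ :=
  des l + tripCount l (fun a b c =>
    decide ((a < c ∧ c < b) ∨ (b < a ∧ a < c) ∨ (c < b ∧ b < a)))

/-- STAT on words: occurrences of 213 + 212 + 132 + 121 + 321 + 21 (first two letters adjacent). -/
def STATw (l : List ℕ) : ℕ :=
  des l + tripCount l (fun a b c =>
    decide ((b < a ∧ a < c) ∨ (b < a ∧ a = c) ∨ (a < c ∧ c < b) ∨
            (a = c ∧ c < b) ∨ (c < b ∧ b < a)))

/-- Standardization (coding map) of a word. -/
def stdz (l : List ℕ) : List ℕ :=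
  (List.range l.length).map fun i =>
    ((List.range l.length).filter fun j =>
      decide (l.getD j 0 < l.getD i 0 ∨ (l.getD j 0 = l.getD i 0 ∧ j ≤ i))).length

/-- Inverse descent set: values v of the standardization such that v+1 occurs before v. -/
def IdSet (l : List ℕ) : Finset ℕ :=
  (Finset.Icc 1 l.length).filter fun v =>
    ∃ i ∈ Finset.range l.length, ∃ j ∈ Finset.range l.length,
      j < i ∧ (stdz l).getD i 0 = v ∧ (stdz l).getD j 0 = v + 1

def ides (l : List ℕ) : ℕ := (IdSet l).card

def IMAJ (l : List ℕ) : ℕ := ∑ i ∈ IdSet l, i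

/-- `l` is a permutation of {1, …, n} written in one-line notation. -/
def IsPermList (l : List ℕ) : Prop := l.Perm (List.range' 1 l.length)

def INV (l : List ℕ) : ℕ :=
  (((Finset.Icc 1 l.length) ×ˢ (Finset.Icc 1 l.length)).filter
    (fun q => q.1 < q.2 ∧ wv l q.2 < wv l q.1)).card



lemma stdz_length (l : List ℕ) : (stdz l).length = l.length := by simp [stdz]

noncomputable def Fk (l : List ℕ) (i : ℕ) : Finset ℕ :=
  (Finset.range l.length).filter fun j =>
    l.getD j 0 < l.getD i 0 ∨ (l.getD j 0 = l.getD i 0 ∧ j ≤ i)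

lemma stdz_getD (l : List ℕ) (i : ℕ) (h : i < l.length) :
    (stdz l).getD i 0 = (Fk l i).card := by
  classical
  have h2 : i < (stdz l).length := by rw [stdz_length]; exact h
  rw [List.getD_eq_getElem _ _ h2]
  simp only [stdz, List.getElem_map, List.getElem_range]
  rfl

lemma mem_Fk {l : List ℕ} {i j : ℕ} :
    j ∈ Fk l i ↔ j < l.length ∧
      (l.getD j 0 < l.getD i 0 ∨ (l.getD j 0 = l.getD i 0 ∧ j ≤ i)) := by
  simp [Fk]

lemma self_mem_Fk {l : List ℕ} {i : ℕ} (h : i < l.length) : i ∈ Fk l i :=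
  mem_Fk.2 ⟨h, Or.inr ⟨rfl, le_rfl⟩⟩

/-- strict monotonicity of the standardization counts along the key order -/
lemma stdz_lt {l : List ℕ} {i j : ℕ} (hi : i < l.length) (hj : j < l.length)
    (hkey : l.getD j 0 < l.getD i 0 ∨ (l.getD j 0 = l.getD i 0 ∧ j < i)) :
    (stdz l).getD j 0 < (stdz l).getD i 0 := by
  classical
  rw [stdz_getD l i hi, stdz_getD l j hj]
  apply Finset.card_lt_card
  constructor
  · intro k hk
    rcases mem_Fk.1 hk with ⟨hkl, hkk⟩
    refine mem_Fk.2 ⟨hkl, ?_⟩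
    rcases hkey with h1 | ⟨h1, h2⟩
    · rcases hkk with h3 | ⟨h3, h4⟩
      · exact Or.inl (h3.trans h1)
      · exact Or.inl (h3 ▸ h1)
    · rcases hkk with h3 | ⟨h3, h4⟩
      · exact Or.inl (h1 ▸ h3)
      · exact Or.inr ⟨h3.trans h1, h4.trans h2.le⟩
  · intro hsub
    have := hsub (self_mem_Fk hi)
    rcases mem_Fk.1 this with ⟨-, hkk⟩
    rcases hkey with h1 | ⟨h1, h2⟩
    · rcases hkk with h3 | ⟨h3, h4⟩
      · omega
      · omega
    · rcases hkk with h3 | ⟨h3, h4⟩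
      · omega
      · omega

lemma stdz_pos {l : List ℕ} {i : ℕ} (hi : i < l.length) :
    1 ≤ (stdz l).getD i 0 := by
  rw [stdz_getD l i hi]
  exact Finset.card_pos.2 ⟨i, self_mem_Fk hi⟩

/-- bridge: index-counting equals countP -/
lemma bridge (l : List ℕ) (p : ℕ → Bool) :
    ((Finset.range l.length).filter (fun k => p (l.getD k 0) = true)).card = l.countP p := by
  classical
  induction l using List.reverseRecOn with
  | nil => simp
  | append_singleton l a ih =>
      rw [Finset.card_filter] at *
      rw [List.length_append, List.length_singleton, Finset.sum_range_succ]
      rw [List.countP_append]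
      have h1 : ∀ k ∈ Finset.range l.length,
          (if p ((l ++ [a]).getD k 0) = true then 1 else 0) =
          (if p (l.getD k 0) = true then 1 else 0) := by
        intro k hk
        rw [Finset.mem_range] at hk
        rw [List.getD_eq_getElem _ _ (by simp; omega), List.getD_eq_getElem _ _ hk,
          List.getElem_append_left hk]
      rw [Finset.sum_congr rfl h1, ih]
      have h2 : (l ++ [a]).getD l.length 0 = a := by
        rw [List.getD_eq_getElem _ _ (by simp)]
        simp
      rw [h2]
      simp [List.countP_cons]

lemma sorted_getD_mono {l' : List ℕ} (hs : l'.Pairwise (· ≤ ·)) {a b : ℕ}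
    (hab : a ≤ b) (hb : b < l'.length) : l'.getD a 0 ≤ l'.getD b 0 := by
  rcases eq_or_lt_of_le hab with rfl | h
  · exact le_rfl
  · rw [List.getD_eq_getElem _ _ (lt_trans h hb), List.getD_eq_getElem _ _ hb]
    exact List.pairwise_iff_getElem.1 hs a b (lt_trans h hb) hb h

/-- the value of `l` at `i` equals the sorted rearrangement at position `stdz l i` (1-based) -/
lemma valueLemma {l l' : List ℕ} (hs : l'.Pairwise (· ≤ ·)) (hp : l'.Perm l)
    {i : ℕ} (hi : i < l.length) :
    l'.getD ((stdz l).getD i 0 - 1) 0 = l.getD i 0 := by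
  classical
  set x := l.getD i 0 with hx
  set s := (stdz l).getD i 0 with hsd
  have hlen : l'.length = l.length := hp.length_eq
  have hs1 : 1 ≤ s := stdz_pos hi
  -- upper bound
  have hsle : s ≤ l.countP (fun a => a ≤ x) := by
    rw [hsd, stdz_getD l i hi, ← bridge]
    apply Finset.card_le_card
    intro k hk
    rcases mem_Fk.1 hk with ⟨hkl, hkk⟩
    simp only [Finset.mem_filter, Finset.mem_range, decide_eq_true_eq]
    exact ⟨hkl, by rcases hkk with h | ⟨h, -⟩ <;> omega⟩
  -- lower bound
  have hslt : l.countP (fun a => a < x) < s := by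
    rw [hsd, stdz_getD l i hi, ← bridge]
    apply Finset.card_lt_card
    constructor
    · intro k hk
      simp only [Finset.mem_filter, Finset.mem_range, decide_eq_true_eq] at hk
      exact mem_Fk.2 ⟨hk.1, Or.inl hk.2⟩
    · intro hsub
      have := hsub (self_mem_Fk hi)
      simp only [Finset.mem_filter, Finset.mem_range, decide_eq_true_eq] at this
      omega
  have hcle : l.countP (fun a => a ≤ x) ≤ l.length := List.countP_le_length
  have ht : s - 1 < l'.length := by rw [hlen]; omega
  have hc1 : l'.countP (fun a => a < x) = l.countP (fun a => a < x) := hp.countP_eq _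
  have hc2 : l'.countP (fun a => a ≤ x) = l.countP (fun a => a ≤ x) := hp.countP_eq _
  have h7 : ¬ (l'.getD (s - 1) 0 < x) := by
    intro hlt
    have hsubr : Finset.range (s - 1 + 1) ⊆
        (Finset.range l'.length).filter (fun k => (decide (l'.getD k 0 < x)) = true) := by
      intro k hk
      rw [Finset.mem_range] at hk
      refine Finset.mem_filter.2 ⟨Finset.mem_range.2 (by omega), ?_⟩
      simp only [decide_eq_true_eq]
      exact lt_of_le_of_lt (sorted_getD_mono hs (by omega) ht) hlt
    have := Finset.card_le_card hsubr
    rw [Finset.card_range, bridge l' (fun a => decide (a < x))] at this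
    omega
  have h8 : ¬ (x < l'.getD (s - 1) 0) := by
    intro hlt
    have hsubr : (Finset.range l'.length).filter (fun k => (decide (l'.getD k 0 ≤ x)) = true)
        ⊆ Finset.range (s - 1) := by
      intro k hk
      rcases Finset.mem_filter.1 hk with ⟨hk1, hk2⟩
      rw [Finset.mem_range] at hk1 ⊢
      simp only [decide_eq_true_eq] at hk2
      by_contra hge
      have : l'.getD (s - 1) 0 ≤ l'.getD k 0 := sorted_getD_mono hs (by omega) hk1
      omega
    have := Finset.card_le_card hsubr
    rw [Finset.card_range, bridge l' (fun a => decide (a ≤ x))] at this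
    omega
  omega

lemma stdz_le {l : List ℕ} {i : ℕ} (hi : i < l.length) :
    (stdz l).getD i 0 ≤ l.length := by
  rw [stdz_getD l i hi]
  calc (Fk l i).card ≤ (Finset.range l.length).card := Finset.card_le_card (Finset.filter_subset _ _)
    _ = l.length := Finset.card_range _

lemma range'_getD {n t : ℕ} (h : t < n) : (List.range' 1 n).getD t 0 = 1 + t := by
  rw [List.getD_eq_getElem _ _ (by simpa using h)]
  simp [List.getElem_range']

lemma range'_sorted (n : ℕ) : List.Pairwise (· ≤ ·) (List.range' 1 n) :=
  (List.pairwise_lt_range' (s := 1) (n := n)).imp le_of_lt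

lemma stdz_perm_eq {π : List ℕ} (hperm : π.Perm (List.range' 1 π.length)) :
    stdz π = π := by
  apply List.ext_getElem (stdz_length π)
  intro i h1 h2
  have hi : i < π.length := h2
  have hv := valueLemma (range'_sorted π.length) hperm.symm hi
  have hs1 : 1 ≤ (stdz π).getD i 0 := stdz_pos hi
  have hs2 : (stdz π).getD i 0 ≤ π.length := stdz_le hi
  rw [range'_getD (by omega)] at hv
  rw [← List.getD_eq_getElem (stdz π) 0 h1, ← List.getD_eq_getElem π 0 h2]
  omega

lemma countP_le_range' (n b : ℕ) (h : b ≤ n) :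
    (List.range' 1 n).countP (fun a => decide (a ≤ b)) = b := by
  induction n with
  | zero => simp; omega
  | succ n ih =>
      rw [List.range'_concat]
      rw [List.countP_append]
      simp only [one_mul]
      rcases Nat.lt_or_ge b (n+1) with hb | hb
      · rw [ih (by omega)]
        simp only [List.countP_singleton]
        have : ¬ (1 + n ≤ b) := by omega
        simp [this]
      · have hbe : b = n + 1 := by omega
        subst hbe
        have hall : (List.range' 1 n).countP (fun a => decide (a ≤ n + 1)) =
            (List.range' 1 n).length := by
          rw [List.countP_eq_length]
          intro a ha
          rw [List.mem_range'_1] at ha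
          simp; omega
        rw [hall, List.length_range']
        rw [List.countP_singleton]
        have : 1 + n ≤ n + 1 := by omega
        simp [this]

/-- A permutation π lies in the image of R(w) under the coding map iff
Id(π) ⊆ {b₁, …, b_k}, the block-end positions of the sorted word. -/
theorem stmt3 (n : ℕ) (w wbar : List ℕ) (hw : w.length = n)
    (hre : wbar.Perm w) (hsort : wbar.Pairwise (· ≤ ·))
    (B : Finset ℕ) (hB : B = (Finset.Ico 1 n).filter fun i => wv wbar i < wv wbar (i + 1))
    (π : List ℕ) (hπ : π.length = n) (hperm : IsPermList π) :
    (∃ v : List ℕ, v.Perm w ∧ stdz v = π) ↔ IdSet π ⊆ B := by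
  classical
  have hperm' : π.Perm (List.range' 1 n) := by rw [← hπ]; exact hperm
  have hstdzπ : stdz π = π := stdz_perm_eq hperm
  have hbarl : wbar.length = n := hre.length_eq.trans hw
  have hval : ∀ k, k < n → 1 ≤ π.getD k 0 ∧ π.getD k 0 ≤ n := by
    intro k hk
    have hkl : k < π.length := by omega
    have : π.getD k 0 ∈ π := by
      rw [List.getD_eq_getElem _ _ hkl]; exact List.getElem_mem hkl
    have := hperm'.mem_iff.1 this
    rw [List.mem_range'_1] at this
    omega
  have hinj : ∀ j k, j < n → k < n → π.getD j 0 = π.getD k 0 → j = k := by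
    intro j k hj hk he
    have hnd : π.Nodup := hperm'.nodup_iff.2 (List.nodup_range' (s := 1) (n := n))
    have hjl : j < π.length := by omega
    have hkl : k < π.length := by omega
    rw [List.getD_eq_getElem _ _ hjl, List.getD_eq_getElem _ _ hkl] at he
    exact (hnd.getElem_inj_iff).1 he
  have hsurj : ∀ a, 1 ≤ a → a ≤ n → ∃ k, k < n ∧ π.getD k 0 = a := by
    intro a h1 h2
    have : a ∈ π := hperm'.mem_iff.2 (List.mem_range'_1.2 ⟨h1, by omega⟩)
    obtain ⟨k, hk, hke⟩ := List.mem_iff_getElem.1 this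
    exact ⟨k, by omega, by rw [List.getD_eq_getElem _ _ hk]; exact hke⟩
  -- membership in IdSet, simplified using stdz π = π
  have hIdSet : ∀ m, m ∈ IdSet π ↔ (1 ≤ m ∧ m ≤ n) ∧
      ∃ i, i < n ∧ ∃ j, j < n ∧ j < i ∧ π.getD i 0 = m ∧ π.getD j 0 = m + 1 := by
    intro m
    simp only [IdSet, Finset.mem_filter, Finset.mem_Icc, Finset.mem_range, hstdzπ, hπ]
  have hBmem : ∀ m, m ∈ B ↔ (1 ≤ m ∧ m < n) ∧
      wbar.getD (m - 1) 0 < wbar.getD m 0 := by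
    intro m
    rw [hB]
    rw [Finset.mem_filter, Finset.mem_Ico]
    unfold wv
    constructor
    · rintro ⟨⟨h1, h2⟩, h3⟩
      refine ⟨⟨h1, h2⟩, ?_⟩
      simpa using h3
    · rintro ⟨⟨h1, h2⟩, h3⟩
      exact ⟨⟨h1, h2⟩, by simpa using h3⟩
  constructor
  · rintro ⟨v, hvw, hvstd⟩ m hm
    rw [hIdSet] at hm
    obtain ⟨⟨hm1, hm2⟩, i, hi, j, hj, hji, hπi, hπj⟩ := hm
    have hv_len : v.length = n := hvw.length_eq.trans hw
    have hvbar : wbar.Perm v := hre.trans hvw.symm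
    have hil : i < v.length := by omega
    have hjl : j < v.length := by omega
    have hVi := valueLemma hsort hvbar hil
    have hVj := valueLemma hsort hvbar hjl
    rw [hvstd, hπi] at hVi
    rw [hvstd, hπj] at hVj
    simp only [Nat.add_sub_cancel] at hVj
    have hmn : m + 1 ≤ n := by
      have h := (hval j hj).2; rw [hπj] at h; exact h
    -- v i < v j
    have hlt : v.getD i 0 < v.getD j 0 := by
      by_contra hcon
      push_neg at hcon
      rcases lt_or_eq_of_le hcon with hc | hc
      · have := stdz_lt hil hjl (Or.inl hc)
        rw [hvstd, hπi, hπj] at this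
        omega
      · have := stdz_lt hil hjl (Or.inr ⟨hc, hji⟩)
        rw [hvstd, hπi, hπj] at this
        omega
    rw [hBmem]
    refine ⟨⟨hm1, by omega⟩, ?_⟩
    rw [hVi, hVj]
    exact hlt
  · intro hsub
    -- the chain lemma: if wbar is constant on block [a, a+d+1], the position of a
    -- comes before the position of a+d+1
    have adj : ∀ a k i', k < n → i' < n → π.getD k 0 = a → π.getD i' 0 = a + 1 →
        wbar.getD (a - 1) 0 = wbar.getD a 0 → k < i' := by
      intro a k i' hk hi' hπk hπi' heq
      have ha1 : 1 ≤ a := by have := hval k hk; omega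
      have ha2 : a + 1 ≤ n := by have := hval i' hi'; omega
      by_contra hcon
      push_neg at hcon
      have hne : i' ≠ k := by
        intro h; rw [h, hπk] at hπi'; omega
      have hik : i' < k := by omega
      have : a ∈ IdSet π := by
        rw [hIdSet]
        exact ⟨⟨ha1, by omega⟩, k, hk, i', hi', hik, hπk, hπi'⟩
      have := hsub this
      rw [hBmem] at this
      omega
    have chain : ∀ d a k i', k < n → i' < n → π.getD k 0 = a → π.getD i' 0 = a + d + 1 →
        wbar.getD (a - 1) 0 = wbar.getD (a + d) 0 → k < i' := by
      intro d
      induction d with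
      | zero => intro a k i' h1 h2 h3 h4 h5; exact adj a k i' h1 h2 h3 h4 (by simpa using h5)
      | succ d ih =>
          intro a k i' hk hi' hπk hπi' heq
          have ha1 : 1 ≤ a := by have := hval k hk; omega
          have ha2 : a + d + 2 ≤ n := by have := hval i' hi'; omega
          obtain ⟨k', hk', hπk'⟩ := hsurj (a + d + 1) (by omega) (by omega)
          have hmono1 : wbar.getD (a - 1) 0 ≤ wbar.getD (a + d) 0 :=
            sorted_getD_mono hsort (by omega) (by omega)
          have hmono2 : wbar.getD (a + d) 0 ≤ wbar.getD (a + d + 1) 0 :=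
            sorted_getD_mono hsort (by omega) (by omega)
          have heq' : wbar.getD (a - 1) 0 = wbar.getD (a + d) 0 := by
            have : a + (d + 1) = a + d + 1 := by omega
            rw [this] at heq
            omega
          have h1 : k < k' := ih a k k' hk hk' hπk (by omega) heq'
          have h2 : k' < i' := by
            apply adj (a + d + 1) k' i' hk' hi' hπk' (by omega)
            have e1 : a + d + 1 - 1 = a + d := by omega
            rw [e1]
            have e2 : wbar.getD (a - 1) 0 = wbar.getD (a + (d + 1)) 0 := heq
            have e3 : a + (d + 1) = a + d + 1 := by omega
            rw [e3] at e2
            omega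
          omega
    -- construct v
    set f : ℕ → ℕ := fun p => wbar.getD (p - 1) 0 with hf
    set v : List ℕ := π.map f with hv
    have hv_len : v.length = n := by rw [hv, List.length_map, hπ]
    have hmapr : (List.range' 1 n).map f = wbar := by
      apply List.ext_getElem (by simp [hbarl])
      intro t h1 h2
      rw [List.getElem_map]
      simp only [List.getElem_range']
      have : 1 + 1 * t - 1 = t := by omega
      rw [hf]
      simp only [this]
      rw [List.getD_eq_getElem _ _ h2]
    have hvperm : v.Perm w := by
      have : v.Perm ((List.range' 1 n).map f) := hperm'.map f
      rw [hmapr] at this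
      exact this.trans hre
    have hvget : ∀ k, k < n → v.getD k 0 = wbar.getD (π.getD k 0 - 1) 0 := by
      intro k hk
      have hkl : k < π.length := by omega
      rw [hv, List.getD_eq_getElem _ _ (by rw [List.length_map]; omega), List.getElem_map,
        List.getD_eq_getElem _ _ hkl]
    refine ⟨v, hvperm, ?_⟩
    apply List.ext_getElem (by rw [stdz_length, hv_len, hπ])
    intro i h1 h2
    have hi : i < n := by omega
    have hil : i < v.length := by omega
    rw [← List.getD_eq_getElem (stdz v) 0 h1, ← List.getD_eq_getElem π 0 h2]
    rw [stdz_getD v i hil]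
    set b := π.getD i 0 with hb'
    have hb1 : 1 ≤ b := (hval i hi).1
    have hb2 : b ≤ n := (hval i hi).2
    have hFeq : Fk v i = (Finset.range n).filter
        (fun k => (decide (π.getD k 0 ≤ b)) = true) := by
      apply Finset.ext
      intro k
      rw [mem_Fk, Finset.mem_filter, Finset.mem_range, hv_len]
      constructor
      · rintro ⟨hk, hkey⟩
        refine ⟨hk, ?_⟩
        simp only [decide_eq_true_eq]
        set a := π.getD k 0 with ha'
        have ha1 : 1 ≤ a := (hval k hk).1
        have ha2 : a ≤ n := (hval k hk).2
        by_contra hcon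
        push_neg at hcon  -- b < a
        have hmono : wbar.getD (b - 1) 0 ≤ wbar.getD (a - 1) 0 :=
          sorted_getD_mono hsort (by omega) (by omega)
        rw [hvget k hk, hvget i hi, ← ha', ← hb'] at hkey
        rcases hkey with hlt | ⟨heqq, hki⟩
        · omega
        · -- wbar (b-1) = wbar (a-1), b < a, so pos(b)=i < pos(a)=k
          have : i < k := by
            apply chain (a - b - 1) b i k hi hk rfl (by omega)
            have h1 : b + (a - b - 1) = a - 1 := by omega
            rw [h1]
            omega
          omega
      · rintro ⟨hk, hle⟩
        simp only [decide_eq_true_eq] at hle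
        refine ⟨hk, ?_⟩
        set a := π.getD k 0 with ha'
        have ha1 : 1 ≤ a := (hval k hk).1
        rw [hvget k hk, hvget i hi, ← ha', ← hb']
        rcases eq_or_lt_of_le hle with heqq | hltab
        · have : k = i := hinj k i hk hi (by rw [← ha', ← hb', heqq])
          exact Or.inr ⟨by rw [heqq], by omega⟩
        · have hmono : wbar.getD (a - 1) 0 ≤ wbar.getD (b - 1) 0 :=
            sorted_getD_mono hsort (by omega) (by omega)
          rcases lt_or_eq_of_le hmono with hlt | heqq
          · exact Or.inl hlt
          · refine Or.inr ⟨heqq, ?_⟩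
            have : k < i := by
              apply chain (b - a - 1) a k i hk hi rfl (by omega)
              have h1 : a + (b - a - 1) = b - 1 := by omega
              rw [h1]
              omega
            omega
    rw [hFeq]
    rw [show (Finset.range n) = Finset.range π.length by rw [hπ]]
    rw [bridge π (fun x => decide (x ≤ b))]
    rw [hperm'.countP_eq]
    exact countP_le_range' n b hb2
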